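/- Let n, m ≥ 1, c > 0, let 0 ≤ 2ε < γ, and let H : ℝⁿ → ℝ² be given by H(x) = L · ReLU(Wx + b) + d, where W is a real n×n matrix, b ∈ ℝⁿ, L is a real 2×n matrix, d ∈ ℝ², and every row of W and of L has Euclidean norm at most c. Let x_1, …, x_m ∈ ℝⁿ with labels y_1, …, y_m ∈ {0,1}, and set t_i = (1,0) ∈ ℝ² if y_i = 0 and t_i = (0,1) if y_i = 1. Suppose the squared-error loss (1/m)·Σ_{i=1}^m ‖H(x_i) − t_i‖₂² is at most ε, and the set G = { i : Ĥ(x_i) = y_i } of correctly classified indices satisfies |G| ≥ γ·m. Then there exist nonnegative reals (ρ_i)_{i∈G} such that for every i ∈ G and every x' ∈ ℝⁿ with ‖x' − x_i‖₂ < ρ_i one has Ĥ(x') = Ĥ(x_i), and (1/m)·Σ_{i∈G} ρ_i ≥ (γ − √(2εγ)) / (2·√n·c²). -/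

import Mathlib

/-- Entrywise ReLU on vectors. -/
noncomputable def relu {p : ℕ} (v : Fin p → ℝ) : Fin p → ℝ := fun i => max (v i) 0

private lemma dot_abs_le {p : ℕ} (u v : Fin p → ℝ) :
    |∑ k, u k * v k| ≤ Real.sqrt (∑ k, u k ^ 2) * Real.sqrt (∑ k, v k ^ 2) := by
  rw [← Real.sqrt_mul (by positivity), ← Real.sqrt_sq_eq_abs]
  exact Real.sqrt_le_sqrt (Finset.sum_mul_sq_le_sq_mul_sq _ _ _)

private lemma relu_sq_le (p q : ℝ) : (max p 0 - max q 0) ^ 2 ≤ (p - q) ^ 2 := by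
  rcases le_total p 0 with h | h <;> rcases le_total q 0 with h' | h' <;>
    simp [max_eq_right, max_eq_left, h, h'] <;> nlinarith

set_option maxHeartbeats 1600000 in
/-- Lower bound on the average robustness radius for a one-hidden-layer ReLU
classifier under the squared-error loss, assuming the `L_{2,∞}` norms of the weight matrices
are at most `c`, the loss is at most `ε`, and the training accuracy is at least `γ > 2ε`. -/
theorem average_robust_radius_square_loss (n m : ℕ) (hn : 1 ≤ n) (hm : 1 ≤ m)
    (c : ℝ) (hc : 0 < c) (ε γ : ℝ) (hε : 0 ≤ ε) (hγ : 2 * ε < γ)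
    (W : Matrix (Fin n) (Fin n) ℝ) (b : Fin n → ℝ)
    (L : Matrix (Fin 2) (Fin n) ℝ) (d : Fin 2 → ℝ)
    (hW : ∀ i, Real.sqrt (∑ j, W i j ^ 2) ≤ c)
    (hL : ∀ i, Real.sqrt (∑ j, L i j ^ 2) ≤ c)
    (H : (Fin n → ℝ) → Fin 2 → ℝ)
    (hH : ∀ x, H x = L.mulVec (relu (W.mulVec x + b)) + d)
    (Hhat : (Fin n → ℝ) → Fin 2)
    (hHhat : ∀ x, Hhat x = if H x 0 > H x 1 then 0 else 1)
    (x : Fin m → Fin n → ℝ) (y : Fin m → Fin 2)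
    (t : Fin m → Fin 2 → ℝ)
    (ht : ∀ i j, t i j = if j = y i then 1 else 0)
    (hloss : (1 / m : ℝ) * ∑ i, ∑ j, (H (x i) j - t i j) ^ 2 ≤ ε)
    (G : Finset (Fin m)) (hG : ∀ i, i ∈ G ↔ Hhat (x i) = y i)
    (hacc : γ * m ≤ G.card) :
    ∃ ρ : Fin m → ℝ,
      (∀ i ∈ G, 0 ≤ ρ i) ∧
      (∀ i ∈ G, ∀ x' : Fin n → ℝ,
        Real.sqrt (∑ j, (x' j - x i j) ^ 2) < ρ i → Hhat x' = Hhat (x i)) ∧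
      (1 / m : ℝ) * ∑ i ∈ G, ρ i ≥
        (γ - Real.sqrt (2 * ε * γ)) / (2 * Real.sqrt n * c ^ 2) := by
  have hm' : (0:ℝ) < m := by exact_mod_cast hm
  have hn' : (1:ℝ) ≤ n := by exact_mod_cast hn
  have hsn : (1:ℝ) ≤ Real.sqrt n := by
    rw [show (1:ℝ) = Real.sqrt 1 by simp]; exact Real.sqrt_le_sqrt hn'
  set K : ℝ := 2 * Real.sqrt n * c ^ 2 with hK
  have hK0 : 0 < K := by positivity
  set f : (Fin n → ℝ) → ℝ := fun a => H a 0 - H a 1 with hf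
  -- row norm squared bounds
  have hWsq : ∀ k, (∑ l, W k l ^ 2) ≤ c ^ 2 := by
    intro k
    have h1 := hW k
    have h2 : (0:ℝ) ≤ ∑ l, W k l ^ 2 := by positivity
    nlinarith [Real.sq_sqrt h2, Real.sqrt_nonneg (∑ l, W k l ^ 2)]
  have hLsq : ∀ k, (∑ l, L k l ^ 2) ≤ c ^ 2 := by
    intro k
    have h1 := hL k
    have h2 : (0:ℝ) ≤ ∑ l, L k l ^ 2 := by positivity
    nlinarith [Real.sq_sqrt h2, Real.sqrt_nonneg (∑ l, L k l ^ 2)]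
  -- Lipschitz bound on each coordinate of H
  have hlip : ∀ (j : Fin 2) (a a' : Fin n → ℝ),
      |H a j - H a' j| ≤ Real.sqrt n * c ^ 2 * Real.sqrt (∑ k, (a k - a' k) ^ 2) := by
    intro j a a'
    have hD0 : (0:ℝ) ≤ ∑ k, (a k - a' k) ^ 2 := by positivity
    have h1 : H a j - H a' j
        = ∑ k, L j k * (relu (W.mulVec a + b) k - relu (W.mulVec a' + b) k) := by
      rw [hH, hH]
      simp only [Pi.add_apply, Matrix.mulVec, dotProduct, mul_sub,
        Finset.sum_sub_distrib]
      ring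
    rw [h1]
    have h2 := dot_abs_le (fun k => L j k)
      (fun k => relu (W.mulVec a + b) k - relu (W.mulVec a' + b) k)
    refine h2.trans ?_
    have h3 : Real.sqrt (∑ k, (relu (W.mulVec a + b) k - relu (W.mulVec a' + b) k) ^ 2)
        ≤ Real.sqrt (∑ k, (W.mulVec a k - W.mulVec a' k) ^ 2) := by
      apply Real.sqrt_le_sqrt
      apply Finset.sum_le_sum
      intro k _
      have := relu_sq_le (W.mulVec a k + b k) (W.mulVec a' k + b k)
      simpa [relu] using this
    have h4 : ∀ k, (W.mulVec a k - W.mulVec a' k) ^ 2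
        ≤ c ^ 2 * ∑ l, (a l - a' l) ^ 2 := by
      intro k
      have he : W.mulVec a k - W.mulVec a' k = ∑ l, W k l * (a l - a' l) := by
        simp only [Matrix.mulVec, dotProduct, mul_sub, Finset.sum_sub_distrib]
      rw [he]
      calc (∑ l, W k l * (a l - a' l)) ^ 2
          ≤ (∑ l, W k l ^ 2) * ∑ l, (a l - a' l) ^ 2 :=
            Finset.sum_mul_sq_le_sq_mul_sq _ _ _
        _ ≤ c ^ 2 * ∑ l, (a l - a' l) ^ 2 := by
            apply mul_le_mul_of_nonneg_right (hWsq k) hD0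
    have h5 : Real.sqrt (∑ k, (W.mulVec a k - W.mulVec a' k) ^ 2)
        ≤ Real.sqrt (n * (c ^ 2 * ∑ l, (a l - a' l) ^ 2)) := by
      apply Real.sqrt_le_sqrt
      calc ∑ k, (W.mulVec a k - W.mulVec a' k) ^ 2
          ≤ ∑ _k : Fin n, c ^ 2 * ∑ l, (a l - a' l) ^ 2 :=
            Finset.sum_le_sum (fun k _ => h4 k)
        _ = n * (c ^ 2 * ∑ l, (a l - a' l) ^ 2) := by
            simp [Finset.sum_const, Finset.card_univ, mul_comm]
    have h6 : Real.sqrt (n * (c ^ 2 * ∑ l, (a l - a' l) ^ 2))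
        = Real.sqrt n * c * Real.sqrt (∑ l, (a l - a' l) ^ 2) := by
      rw [Real.sqrt_mul (by positivity), Real.sqrt_mul (by positivity),
        Real.sqrt_sq hc.le, mul_assoc]
    calc Real.sqrt (∑ l, L j l ^ 2)
          * Real.sqrt (∑ k, (relu (W.mulVec a + b) k - relu (W.mulVec a' + b) k) ^ 2)
        ≤ c * (Real.sqrt n * c * Real.sqrt (∑ l, (a l - a' l) ^ 2)) := by
          apply mul_le_mul (hL j) (h3.trans (h5.trans_eq h6)) (Real.sqrt_nonneg _)
            hc.le
      _ = Real.sqrt n * c ^ 2 * Real.sqrt (∑ l, (a l - a' l) ^ 2) := by ring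
  -- the radii
  refine ⟨fun i => |f (x i)| / K, fun i _ => by positivity, ?_, ?_⟩
  · -- robustness
    intro i _ x' hx'
    have hd0 : 0 ≤ Real.sqrt (∑ j, (x' j - x i j) ^ 2) := Real.sqrt_nonneg _
    have hKd : K * Real.sqrt (∑ j, (x' j - x i j) ^ 2) < |f (x i)| := by
      rw [lt_div_iff₀ hK0] at hx'
      linarith [hx']
    have hdiff : |f x' - f (x i)| ≤ K * Real.sqrt (∑ j, (x' j - x i j) ^ 2) := by
      have h0 := hlip 0 x' (x i)
      have h1 := hlip 1 x' (x i)
      have : f x' - f (x i) = (H x' 0 - H (x i) 0) - (H x' 1 - H (x i) 1) := by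
        simp [hf]; ring
      rw [this]
      calc |(H x' 0 - H (x i) 0) - (H x' 1 - H (x i) 1)|
          ≤ |H x' 0 - H (x i) 0| + |H x' 1 - H (x i) 1| := abs_sub _ _
        _ ≤ K * Real.sqrt (∑ j, (x' j - x i j) ^ 2) := by
            rw [hK]; nlinarith [h0, h1]
    have hlt : |f x' - f (x i)| < |f (x i)| := lt_of_le_of_lt hdiff hKd
    rw [hHhat, hHhat]
    by_cases hpos : H (x i) 0 > H (x i) 1
    · have hfi : 0 < f (x i) := sub_pos.2 hpos
      have : 0 < f x' := by
        rw [abs_of_pos hfi] at hlt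
        cases' abs_sub_lt_iff.1 hlt with h1 h2
        linarith
      simp [hpos, show H x' 0 > H x' 1 from sub_pos.1 this]
    · have hfi : f (x i) ≤ 0 := sub_nonpos.2 (not_lt.1 hpos)
      have : ¬ (H x' 0 > H x' 1) := by
        rw [abs_of_nonpos hfi] at hlt
        cases' abs_sub_lt_iff.1 hlt with h1 h2
        have hfx : f x' < 0 := by linarith
        simp only [hf] at hfx
        exact not_lt.2 (by linarith)
      simp [hpos, this]
  · -- the average bound
    have hγ0 : 0 < γ := by linarith
    -- per-sample margin bound
    have hsample : ∀ i : Fin m,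
        1 - Real.sqrt (2 * ∑ j, (H (x i) j - t i j) ^ 2) ≤ |f (x i)| := by
      intro i
      have hl : ∑ j, (H (x i) j - t i j) ^ 2
          = (H (x i) 0 - t i 0) ^ 2 + (H (x i) 1 - t i 1) ^ 2 := Fin.sum_univ_two _
      have hy : y i = 0 ∨ y i = 1 := by omega
      rcases hy with hy | hy
      · have ht0 : t i 0 = 1 := by rw [ht]; simp [hy]
        have ht1 : t i 1 = 0 := by rw [ht]; simp [hy]
        rw [hl, ht0, ht1]
        have key : H (x i) 1 - (H (x i) 0 - 1)
            ≤ Real.sqrt (2 * ((H (x i) 0 - 1) ^ 2 + (H (x i) 1 - 0) ^ 2)) := by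
          refine (le_abs_self _).trans ?_
          rw [← Real.sqrt_sq_eq_abs]
          exact Real.sqrt_le_sqrt (by nlinarith [sq_nonneg (H (x i) 1 + (H (x i) 0 - 1))])
        have : f (x i) ≤ |f (x i)| := le_abs_self _
        simp only [hf] at this ⊢
        linarith
      · have ht0 : t i 0 = 0 := by rw [ht]; simp [hy]
        have ht1 : t i 1 = 1 := by rw [ht]; simp [hy]
        rw [hl, ht0, ht1]
        have key : H (x i) 0 - (H (x i) 1 - 1)
            ≤ Real.sqrt (2 * ((H (x i) 0 - 0) ^ 2 + (H (x i) 1 - 1) ^ 2)) := by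
          refine (le_abs_self _).trans ?_
          rw [← Real.sqrt_sq_eq_abs]
          exact Real.sqrt_le_sqrt (by nlinarith [sq_nonneg (H (x i) 0 + (H (x i) 1 - 1))])
        have : -f (x i) ≤ |f (x i)| := neg_le_abs _
        simp only [hf] at this ⊢
        linarith
    set ℓ : Fin m → ℝ := fun i => ∑ j, (H (x i) j - t i j) ^ 2 with hℓ
    have hℓ0 : ∀ i, 0 ≤ ℓ i := fun i => by positivity
    have hsumℓ : ∑ i, ℓ i ≤ ε * m := by
      rw [one_div, inv_mul_le_iff₀ hm'] at hloss
      linarith [hloss]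
    have hGsum : ∑ i ∈ G, ℓ i ≤ ε * m := by
      refine le_trans (Finset.sum_le_sum_of_subset_of_nonneg (Finset.subset_univ G)
        (fun i _ _ => hℓ0 i)) hsumℓ
    have hεm : (0:ℝ) ≤ 2 * (ε * m) :=
      mul_nonneg (by norm_num) (mul_nonneg hε hm'.le)
    have hγm : (0:ℝ) ≤ γ * m := mul_nonneg hγ0.le hm'.le
    set S : ℝ := ∑ i ∈ G, Real.sqrt (2 * ℓ i) with hS
    have hS0 : 0 ≤ S := Finset.sum_nonneg fun i _ => Real.sqrt_nonneg _
    have hSsq : S ^ 2 ≤ (G.card : ℝ) * (2 * (ε * m)) := by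
      have hcs : (∑ i ∈ G, 1 * Real.sqrt (2 * ℓ i)) ^ 2
          ≤ (∑ i ∈ G, (1:ℝ) ^ 2) * ∑ i ∈ G, Real.sqrt (2 * ℓ i) ^ 2 :=
        Finset.sum_mul_sq_le_sq_mul_sq _ _ _
      have h1 : ∑ i ∈ G, Real.sqrt (2 * ℓ i) ^ 2 = ∑ i ∈ G, 2 * ℓ i := by
        refine Finset.sum_congr rfl fun i _ => ?_
        rw [Real.sq_sqrt (by have := hℓ0 i; linarith)]
      have h2 : (∑ i ∈ G, (1:ℝ) ^ 2) = (G.card : ℝ) := by simp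
      have h3 : ∑ i ∈ G, 2 * ℓ i ≤ 2 * (ε * m) := by
        rw [← Finset.mul_sum]; linarith [hGsum]
      calc S ^ 2 = (∑ i ∈ G, 1 * Real.sqrt (2 * ℓ i)) ^ 2 := by
            simp only [one_mul, hS]
        _ ≤ (∑ i ∈ G, (1:ℝ) ^ 2) * ∑ i ∈ G, Real.sqrt (2 * ℓ i) ^ 2 := hcs
        _ = (G.card : ℝ) * ∑ i ∈ G, 2 * ℓ i := by rw [h1, h2]
        _ ≤ (G.card : ℝ) * (2 * (ε * m)) := by
            exact mul_le_mul_of_nonneg_left h3 (Nat.cast_nonneg _)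
    have hSle : S ≤ Real.sqrt ((G.card : ℝ) * (2 * (ε * m))) := by
      have hy : (0:ℝ) ≤ (G.card : ℝ) * (2 * (ε * m)) :=
        mul_nonneg (Nat.cast_nonneg _) hεm
      exact (Real.le_sqrt hS0 hy).2 hSsq
    -- main lower bound on sum of margins
    have hTsum : (G.card : ℝ) - S ≤ ∑ i ∈ G, |f (x i)| := by
      calc (G.card : ℝ) - S = ∑ i ∈ G, (1 - Real.sqrt (2 * ℓ i)) := by
            rw [Finset.sum_sub_distrib]; simp [hS]
        _ ≤ ∑ i ∈ G, |f (x i)| := Finset.sum_le_sum fun i _ => hsample i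
    -- √ algebra for the final inequality
    set u : ℝ := Real.sqrt (G.card : ℝ) with hu
    set v : ℝ := Real.sqrt (γ * m) with hv
    set w : ℝ := Real.sqrt (2 * (ε * m)) with hw
    have hu2 : u ^ 2 = (G.card : ℝ) := Real.sq_sqrt (Nat.cast_nonneg _)
    have hv2 : v ^ 2 = γ * m := Real.sq_sqrt hγm
    have hw2 : w ^ 2 = 2 * (ε * m) := Real.sq_sqrt hεm
    have huv : v ≤ u := Real.sqrt_le_sqrt hacc
    have hwv : w ≤ v := by
      have h2εm : 2 * ε * m ≤ γ * m := mul_le_mul_of_nonneg_right hγ.le hm'.le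
      exact Real.sqrt_le_sqrt (by linarith)
    have hsplit : Real.sqrt ((G.card : ℝ) * (2 * (ε * m))) = u * w :=
      Real.sqrt_mul (Nat.cast_nonneg _) _
    have hvw : v * w = m * Real.sqrt (2 * ε * γ) := by
      rw [hv, hw, ← Real.sqrt_mul hγm]
      rw [show γ * m * (2 * (ε * m)) = (m:ℝ)^2 * (2 * ε * γ) by ring]
      rw [Real.sqrt_mul (by positivity : (0:ℝ) ≤ (m:ℝ)^2), Real.sqrt_sq hm'.le]
    have hmain : γ * m - m * Real.sqrt (2 * ε * γ) ≤ ∑ i ∈ G, |f (x i)| := by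
      have hu0 : 0 ≤ u := by rw [hu]; exact Real.sqrt_nonneg _
      have h1 : 0 ≤ (u - v) * (u + v - w) :=
        mul_nonneg (by linarith) (by linarith)
      have hexp : u * w - v * w ≤ u ^ 2 - v ^ 2 := by nlinarith [h1]
      have h2 : γ * m - m * Real.sqrt (2 * ε * γ) ≤ (G.card : ℝ) - u * w := by
        rw [← hvw]; linarith [hexp, hu2, hv2]
      calc γ * m - m * Real.sqrt (2 * ε * γ) ≤ (G.card : ℝ) - u * w := h2
        _ ≤ (G.card : ℝ) - S := by rw [← hsplit]; linarith [hSle]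
        _ ≤ ∑ i ∈ G, |f (x i)| := hTsum
    -- conclude
    have hsum : ∑ i ∈ G, |f (x i)| / K = (∑ i ∈ G, |f (x i)|) / K :=
      (Finset.sum_div _ _ _).symm
    rw [ge_iff_le, hsum, div_le_iff₀ hK0]
    rw [show (1:ℝ) / m * ((∑ i ∈ G, |f (x i)|) / K) * K
        = (∑ i ∈ G, |f (x i)|) / m by field_simp]
    rw [le_div_iff₀ hm']
    nlinarith [hmain]
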